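/- For every pointed model ⟨M,w⟩: ■(p∧q) is exactly true (true and non-false) at w iff ■p ∧ ■q is exactly true at w. -/
import Mathlib


/-- Formulas of the language with ¬, ∧, ∨, □, ■, 𝐈 and ▲. -/
inductive Form : Type
  | var : ℕ → Form
  | neg : Form → Form
  | conj : Form → Form → Form
  | disj : Form → Form → Form
  | box : Form → Form
  | bbox : Form → Form
  | ign : Form → Form
  | tri : Form → Form

/-- A Kripke model for Belnap–Dunn modal logic. -/
structure Model (W : Type) where
  R : W → W → Prop
  vp : ℕ → W → Prop
  vn : ℕ → W → Prop

mutual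
  /-- support of truth -/
  def tr {W : Type} (M : Model W) : Form → W → Prop
    | .var n, w => M.vp n w
    | .neg φ, w => fa M φ w
    | .conj φ ψ, w => tr M φ w ∧ tr M ψ w
    | .disj φ ψ, w => tr M φ w ∨ tr M ψ w
    | .box φ, w => ∀ w', M.R w w' → tr M φ w'
    | .bbox φ, w => (∀ w', M.R w w' → tr M φ w') ∧
        ∀ w₁ w₂, M.R w w₁ → M.R w w₂ → fa M φ w₁ → fa M φ w₂
    | .ign φ, w => tr M φ w ∧ (∀ w', M.R w w' → w' ≠ w → fa M φ w') ∧
        ∀ w₁ w₂, M.R w w₁ → w₁ ≠ w → M.R w w₂ → w₂ ≠ w → tr M φ w₁ → tr M φ w₂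
    | .tri φ, w => (∀ w₁ w₂, M.R w w₁ → M.R w w₂ →
          (tr M φ w₁ → tr M φ w₂) ∧ (fa M φ w₁ → fa M φ w₂)) ∧
        ∀ w', M.R w w' → tr M φ w' ∨ fa M φ w'
  /-- support of falsity -/
  def fa {W : Type} (M : Model W) : Form → W → Prop
    | .var n, w => M.vn n w
    | .neg φ, w => tr M φ w
    | .conj φ ψ, w => fa M φ w ∨ fa M ψ w
    | .disj φ ψ, w => fa M φ w ∧ fa M ψ w
    | .box φ, w => ∃ w', M.R w w' ∧ fa M φ w'
    | .bbox φ, w => (∃ w', M.R w w' ∧ fa M φ w') ∨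
        ∃ w₁ w₂, M.R w w₁ ∧ M.R w w₂ ∧ tr M φ w₁ ∧ ¬ tr M φ w₂
    | .ign φ, w => fa M φ w ∨ (∃ w', M.R w w' ∧ w' ≠ w ∧ tr M φ w') ∨
        ∃ w₁ w₂, (M.R w w₁ ∧ w₁ ≠ w) ∧ (M.R w w₂ ∧ w₂ ≠ w) ∧ ¬ fa M φ w₁ ∧ fa M φ w₂
    | .tri φ, w => (∃ w₁ w₂, M.R w w₁ ∧ M.R w w₂ ∧ tr M φ w₁ ∧ ¬ tr M φ w₂) ∨
        (∃ w₁ w₂, M.R w w₁ ∧ M.R w w₂ ∧ fa M φ w₁ ∧ ¬ fa M φ w₂) ∨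
        (∃ w₁ w₂, M.R w w₁ ∧ M.R w w₂ ∧ tr M φ w₁ ∧ fa M φ w₂)
end

/-- φ contains an occurrence of □ -/
def hasBox : Form → Prop
  | .var _ => False
  | .neg φ => hasBox φ
  | .conj φ ψ => hasBox φ ∨ hasBox ψ
  | .disj φ ψ => hasBox φ ∨ hasBox ψ
  | .box _ => True
  | .bbox φ => hasBox φ
  | .ign φ => hasBox φ
  | .tri φ => hasBox φ

/-- φ contains an occurrence of ■ -/
def hasBBox : Form → Prop
  | .var _ => False
  | .neg φ => hasBBox φ
  | .conj φ ψ => hasBBox φ ∨ hasBBox ψ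
  | .disj φ ψ => hasBBox φ ∨ hasBBox ψ
  | .box φ => hasBBox φ
  | .bbox _ => True
  | .ign φ => hasBBox φ
  | .tri φ => hasBBox φ

/-- φ contains an occurrence of 𝐈 -/
def hasIgn : Form → Prop
  | .var _ => False
  | .neg φ => hasIgn φ
  | .conj φ ψ => hasIgn φ ∨ hasIgn ψ
  | .disj φ ψ => hasIgn φ ∨ hasIgn ψ
  | .box φ => hasIgn φ
  | .bbox φ => hasIgn φ
  | .ign _ => True
  | .tri φ => hasIgn φ

/-- φ contains an occurrence of ▲ -/
def hasTri : Form → Prop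
  | .var _ => False
  | .neg φ => hasTri φ
  | .conj φ ψ => hasTri φ ∨ hasTri ψ
  | .disj φ ψ => hasTri φ ∨ hasTri ψ
  | .box φ => hasTri φ
  | .bbox φ => hasTri φ
  | .ign φ => hasTri φ
  | .tri _ => True

/-- validity of the sequent φ ⊢ χ on the frame (W,R) -/
def validOn {W : Type} (R : W → W → Prop) (φ χ : Form) : Prop :=
  ∀ (vp vn : ℕ → W → Prop) (w : W), tr ⟨R, vp, vn⟩ φ w → tr ⟨R, vp, vn⟩ χ w

/-- ♦φ := ¬■¬φ -/
def dia (φ : Form) : Form := .neg (.bbox (.neg φ))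

/-- ■(p∧q) is exactly true at w iff ■p ∧ ■q is exactly true at w. -/
theorem bbox_conj_exactly_true {W : Type} (M : Model W) (w : W) :
    (tr M (.bbox (.conj (.var 0) (.var 1))) w ∧
     ¬ fa M (.bbox (.conj (.var 0) (.var 1))) w) ↔
    (tr M (.conj (.bbox (.var 0)) (.bbox (.var 1))) w ∧
     ¬ fa M (.conj (.bbox (.var 0)) (.bbox (.var 1))) w) := by
  simp only [tr, fa]
  constructor
  · rintro ⟨⟨h1, _⟩, h2⟩
    have noF : ∀ w', M.R w w' → ¬ fa M (.var 0) w' ∧ ¬ fa M (.var 1) w' := by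
      intro w' hr
      constructor
      · intro f; exact h2 (Or.inl ⟨w', hr, Or.inl f⟩)
      · intro f; exact h2 (Or.inl ⟨w', hr, Or.inr f⟩)
    refine ⟨⟨⟨fun w' hr => (h1 w' hr).1, fun w1 w2 r1 r2 f1 => absurd f1 (noF w1 r1).1⟩,
      ⟨fun w' hr => (h1 w' hr).2, fun w1 w2 r1 r2 f1 => absurd f1 (noF w1 r1).2⟩⟩, ?_⟩
    rintro (⟨⟨w', hr, hf⟩ | ⟨w1, w2, r1, r2, t1, nt2⟩⟩ | ⟨⟨w', hr, hf⟩ | ⟨w1, w2, r1, r2, t1, nt2⟩⟩)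
    · exact (noF w' hr).1 hf
    · exact nt2 (h1 w2 r2).1
    · exact (noF w' hr).2 hf
    · exact nt2 (h1 w2 r2).2
  · rintro ⟨⟨⟨t0, _⟩, ⟨t1, _⟩⟩, h2⟩
    have noF : ∀ w', M.R w w' → ¬ fa M (.var 0) w' ∧ ¬ fa M (.var 1) w' := by
      intro w' hr
      constructor
      · intro f; exact h2 (Or.inl (Or.inl ⟨w', hr, f⟩))
      · intro f; exact h2 (Or.inr (Or.inl ⟨w', hr, f⟩))
    refine ⟨⟨fun w' hr => ⟨t0 w' hr, t1 w' hr⟩, ?_⟩, ?_⟩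
    · rintro w1 w2 r1 r2 (f1 | f1)
      · exact absurd f1 (noF w1 r1).1
      · exact absurd f1 (noF w1 r1).2
    · rintro (⟨w', hr, (hf | hf)⟩ | ⟨w1, w2, r1, r2, _, nt2⟩)
      · exact (noF w' hr).1 hf
      · exact (noF w' hr).2 hf
      · exact nt2 ⟨t0 w2 r2, t1 w2 r2⟩
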